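/- In every generalized sun graph, the number of degree-2 vertices strictly exceeds the number of central vertices. -/

import Mathlib

open SimpleGraph

/-- A diagonal (chord) of a convex `n`-gon with vertices `0, …, n-1` in cyclic order,
recorded as a pair `(i, j)` with `i < j`, joining two non-adjacent vertices. -/
def IsDiag (n : ℕ) (p : ℕ × ℕ) : Prop :=
  p.1 < p.2 ∧ p.2 < n ∧ 2 ≤ p.2 - p.1 ∧ p.2 - p.1 ≤ n - 2

/-- Two diagonals of a convex polygon cross (in their interiors). -/
def Crosses (p q : ℕ × ℕ) : Prop :=
  (p.1 < q.1 ∧ q.1 < p.2 ∧ p.2 < q.2) ∨ (q.1 < p.1 ∧ p.1 < q.2 ∧ q.2 < p.2)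

/-- A triangulation of a convex `n`-gon: `n - 3` pairwise non-crossing diagonals.
This is the standard combinatorial presentation of a maximal outerplanar graph on
`n` vertices (the polygon boundary is the outer Hamiltonian cycle). -/
structure PolyTriangulation (n : ℕ) where
  diags : Finset (ℕ × ℕ)
  isDiag : ∀ p ∈ diags, IsDiag n p
  noncross : ∀ p ∈ diags, ∀ q ∈ diags, ¬ Crosses p q
  card_eq : diags.card = n - 3

/-- The maximal outerplanar graph on `Fin n` given by a polygon triangulation:
the boundary Hamiltonian cycle `v_i v_{i+1}` together with the diagonals. -/
def PolyTriangulation.graph {n : ℕ} (T : PolyTriangulation n) : SimpleGraph (Fin n) :=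
  SimpleGraph.fromRel (fun i j =>
    (i.val + 1) % n = j.val ∨ (min i.val j.val, max i.val j.val) ∈ T.diags)

/-- `S` is a total dominating set of `G`: every vertex has a neighbor in `S`. -/
def IsTotalDom {V : Type*} (G : SimpleGraph V) (S : Set V) : Prop :=
  ∀ v, ∃ u ∈ S, G.Adj v u

/-- `G` has two disjoint total dominating sets (total domatic number at least 2). -/
def HasTwoTDS {V : Type*} (G : SimpleGraph V) : Prop :=
  ∃ S₁ S₂ : Set V, Disjoint S₁ S₂ ∧ IsTotalDom G S₁ ∧ IsTotalDom G S₂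

/-- The degree of a vertex in the maximal outerplanar graph of a triangulation. -/
noncomputable def pdeg {n : ℕ} (T : PolyTriangulation n) (v : Fin n) : ℕ :=
  (T.graph.neighborSet v).ncard

/-- A central vertex: no degree-2 vertex in its closed neighborhood, and indexing the
vertices cyclically starting from `v`, all neighbors of `v` have pairwise congruent
indices mod 4. -/
def IsCentral {n : ℕ} (T : PolyTriangulation n) (v : Fin n) : Prop :=
  (∀ u, (u = v ∨ T.graph.Adj v u) → pdeg T u ≠ 2) ∧
  (∀ u w, T.graph.Adj v u → T.graph.Adj v w →
    ((u.val + n - v.val) % n) % 4 = ((w.val + n - v.val) % n) % 4)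

/-- A generalized sun graph: a maximal outerplanar graph of order `n ≡ 2 (mod 4)`
in which the number of degree-2 vertices plus central vertices equals `n / 2`. -/
def IsGenSun {n : ℕ} (T : PolyTriangulation n) : Prop :=
  n % 4 = 2 ∧
  ({v : Fin n | pdeg T v = 2}.ncard + {v : Fin n | IsCentral T v}.ncard = n / 2)

private lemma mod_small (x n : ℕ) (hn : 0 < n) (h : x < 2 * n) :
    x % n = if x < n then x else x - n := by
  split
  · exact Nat.mod_eq_of_lt ‹_›
  · rw [Nat.mod_eq_sub_mod (by omega)]
    exact Nat.mod_eq_of_lt (by omega)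

private lemma adj_iff {n : ℕ} (T : PolyTriangulation n) (u v : Fin n) :
    T.graph.Adj u v ↔ u ≠ v ∧ ((u.val + 1) % n = v.val ∨ (v.val + 1) % n = u.val ∨
      (min u.val v.val, max u.val v.val) ∈ T.diags) := by
  unfold PolyTriangulation.graph
  rw [SimpleGraph.fromRel_adj]
  constructor
  · rintro ⟨hne, (h | h) | (h | h)⟩
    · exact ⟨hne, Or.inl h⟩
    · exact ⟨hne, Or.inr (Or.inr h)⟩
    · exact ⟨hne, Or.inr (Or.inl h)⟩
    · refine ⟨hne, Or.inr (Or.inr ?_)⟩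
      rwa [min_comm, max_comm] at h
  · rintro ⟨hne, h | h | h⟩
    · exact ⟨hne, Or.inl (Or.inl h)⟩
    · exact ⟨hne, Or.inr (Or.inl h)⟩
    · exact ⟨hne, Or.inl (Or.inr h)⟩

private lemma central_idx {n : ℕ} (T : PolyTriangulation n) (hn : 6 ≤ n) {v u : Fin n}
    (hC : IsCentral T v) (h : T.graph.Adj v u) : ((u.val + n - v.val) % n) % 4 = 1 := by
  have hn0 : 0 < n := by omega
  have hvlt := v.isLt
  set w : Fin n := ⟨(v.val + 1) % n, Nat.mod_lt _ hn0⟩ with hw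
  have hwval : w.val = if v.val + 1 < n then v.val + 1 else 0 := by
    show (v.val + 1) % n = _
    rw [mod_small _ n hn0 (by omega)]
    split <;> omega
  have hadjw : T.graph.Adj v w := by
    rw [adj_iff]
    refine ⟨?_, Or.inl rfl⟩
    intro hvw
    have hh : v.val = w.val := congrArg Fin.val hvw
    rw [hwval] at hh
    split at hh <;> omega
  have hidx : ((w.val + n - v.val) % n) % 4 = 1 := by
    rw [hwval]
    split
    · have h1 : v.val + 1 + n - v.val = n + 1 := by omega
      rw [h1, mod_small _ n hn0 (by omega), if_neg (by omega)]
      have h2 : n + 1 - n = 1 := by omega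
      rw [h2]
    · have h1 : 0 + n - v.val = 1 := by omega
      rw [h1, Nat.mod_eq_of_lt (show 1 < n by omega)]
  have heq := hC.2 u w h hadjw
  rw [heq, hidx]

private lemma central_chord {n : ℕ} (T : PolyTriangulation n) (hn : 6 ≤ n) {v : Fin n}
    (hC : IsCentral T v) : ∃ p ∈ T.diags, p.1 = v.val ∨ p.2 = v.val := by
  by_contra hcon
  push_neg at hcon
  have hn0 : 0 < n := by omega
  have hvlt := v.isLt
  set u₁ : Fin n := ⟨(v.val + 1) % n, Nat.mod_lt _ hn0⟩ with hu₁
  set u₂ : Fin n := ⟨(v.val + n - 1) % n, Nat.mod_lt _ hn0⟩ with hu₂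
  have h1 : u₁.val = if v.val + 1 < n then v.val + 1 else 0 := by
    show (v.val + 1) % n = _
    rw [mod_small _ n hn0 (by omega)]
    split <;> omega
  have h2 : u₂.val = if 1 ≤ v.val then v.val - 1 else n - 1 := by
    show (v.val + n - 1) % n = _
    rw [mod_small _ n hn0 (by omega)]
    split <;> split <;> omega
  have hne12 : u₁ ≠ u₂ := by
    intro h
    have hh := congrArg Fin.val h
    rw [h1, h2] at hh
    split at hh <;> split at hh <;> omega
  have hNS : T.graph.neighborSet v = {u₁, u₂} := by
    ext x
    simp only [SimpleGraph.mem_neighborSet, Set.mem_insert_iff, Set.mem_singleton_iff]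
    constructor
    · intro hadj
      rw [adj_iff] at hadj
      obtain ⟨hne, hrel⟩ := hadj
      have hxlt := x.isLt
      rcases hrel with h | h | h
      · left; exact Fin.ext h.symm
      · right
        apply Fin.ext
        rw [mod_small (x.val + 1) n hn0 (by omega)] at h
        show x.val = (v.val + n - 1) % n
        rw [mod_small _ n hn0 (by omega)]
        split at h <;> split <;> omega
      · exfalso
        have hcc := hcon _ h
        have hvx : v.val ≠ x.val := fun hh => hne (Fin.ext hh)
        rcases le_total v.val x.val with hle | hle
        · rw [min_eq_left hle] at hcc
          exact hcc.1 rfl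
        · rw [max_eq_left hle] at hcc
          exact hcc.2 rfl
    · intro hx
      rcases hx with rfl | rfl
      · rw [adj_iff]
        refine ⟨?_, Or.inl rfl⟩
        intro h
        have hh := congrArg Fin.val h
        rw [h1] at hh
        split at hh <;> omega
      · rw [adj_iff]
        refine ⟨?_, Or.inr (Or.inl ?_)⟩
        · intro h
          have hh := congrArg Fin.val h
          rw [h2] at hh
          split at hh <;> omega
        · show (u₂.val + 1) % n = v.val
          rw [h2]
          split
          · rw [show v.val - 1 + 1 = v.val by omega, Nat.mod_eq_of_lt hvlt]
          · rw [show n - 1 + 1 = n by omega, Nat.mod_self]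
            omega
  have hdeg : pdeg T v = 2 := by
    unfold pdeg
    rw [hNS]
    exact Set.ncard_pair hne12
  exact hC.1 v (Or.inl rfl) hdeg

private lemma chord_mod4 {n : ℕ} (T : PolyTriangulation n) (hn : 6 ≤ n) (hn4 : n % 4 = 2)
    {v : Fin n} (hC : IsCentral T v) {p : ℕ × ℕ} (hp : p ∈ T.diags)
    (hinc : p.1 = v.val ∨ p.2 = v.val) : (p.2 - p.1) % 4 = 1 := by
  obtain ⟨hlt, h2n, hlen2, hlenn⟩ := T.isDiag p hp
  have hn0 : 0 < n := by omega
  have hvlt := v.isLt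
  rcases hinc with h | h
  · set u : Fin n := ⟨p.2, h2n⟩ with hu
    have hadj : T.graph.Adj v u := by
      rw [adj_iff]
      refine ⟨Fin.ne_of_val_ne (by show v.val ≠ p.2; omega), Or.inr (Or.inr ?_)⟩
      have hmin : min v.val u.val = p.1 := by show min v.val p.2 = p.1; omega
      have hmax : max v.val u.val = p.2 := by show max v.val p.2 = p.2; omega
      rw [hmin, hmax]
      exact hp
    have hidx := central_idx T hn hC hadj
    rw [show u.val = p.2 from rfl, ← h] at hidx
    rw [mod_small (p.2 + n - p.1) n hn0 (by omega), if_neg (by omega)] at hidx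
    have he : p.2 + n - p.1 - n = p.2 - p.1 := by omega
    rwa [he] at hidx
  · set u : Fin n := ⟨p.1, by omega⟩ with hu
    have hadj : T.graph.Adj v u := by
      rw [adj_iff]
      refine ⟨Fin.ne_of_val_ne (by show v.val ≠ p.1; omega), Or.inr (Or.inr ?_)⟩
      have hmin : min v.val u.val = p.1 := by show min v.val p.1 = p.1; omega
      have hmax : max v.val u.val = p.2 := by show max v.val p.1 = p.2; omega
      rw [hmin, hmax]
      exact hp
    have hidx := central_idx T hn hC hadj
    rw [show u.val = p.1 from rfl, ← h] at hidx
    rw [mod_small (p.1 + n - p.2) n hn0 (by omega), if_pos (by omega)] at hidx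
    omega

private lemma split_lemma (F : Finset (ℕ × ℕ)) (a b c d : ℕ) (hcd : (c, d) ∈ F)
    (hb : ∀ p ∈ F, a ≤ p.1 ∧ p.1 < p.2 ∧ p.2 ≤ b)
    (hnc : ∀ p ∈ F, ∀ q ∈ F, ¬ Crosses p q)
    (hmax : ∀ p ∈ F, p.2 - p.1 ≤ d - c) :
    F ⊆ insert (c, d) ((F.erase (c, d)).filter (fun p => c ≤ p.1 ∧ p.2 ≤ d) ∪
      (F.filter (fun p => p.2 ≤ c) ∪ F.filter (fun p => d ≤ p.1))) := by
  intro p hp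
  by_cases hpcd : p = (c, d)
  · simp [hpcd]
  have h1 := hnc p hp (c, d) hcd
  have hm := hmax p hp
  have hbp := hb p hp
  have hbcd := hb (c, d) hcd
  have hne' : p.1 ≠ c ∨ p.2 ≠ d := by
    by_contra h
    push_neg at h
    exact hpcd (Prod.ext h.1 h.2)
  have hsplit : p.2 ≤ c ∨ (c ≤ p.1 ∧ p.2 ≤ d) ∨ d ≤ p.1 := by
    simp only [Crosses] at h1
    simp only [not_or, not_and] at h1
    omega
  simp only [Finset.mem_insert, Finset.mem_union, Finset.mem_filter, Finset.mem_erase]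
  rcases hsplit with h | h | h
  · exact Or.inr (Or.inr (Or.inl ⟨hp, h⟩))
  · exact Or.inr (Or.inl ⟨⟨hpcd, hp⟩, h⟩)
  · exact Or.inr (Or.inr (Or.inr ⟨hp, h⟩))

/-- General bound: noncrossing diagonals (length ≥ 2) within [a,b]. -/
private lemma lemU : ∀ (m : ℕ) (F : Finset (ℕ × ℕ)) (a b : ℕ), F.card = m →
    (∀ p ∈ F, a ≤ p.1 ∧ p.1 < p.2 ∧ p.2 ≤ b ∧ 2 ≤ p.2 - p.1) →
    (∀ p ∈ F, ∀ q ∈ F, ¬ Crosses p q) →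
    ((a, b) ∉ F → F.card ≤ b - a - 2) ∧ F.card ≤ b - a - 1 := by
  intro m
  induction m using Nat.strong_induction_on with
  | _ m IH =>
  intro F a b hcard hb hnc
  rcases F.eq_empty_or_nonempty with rfl | hne
  · simp
  have hm1 : 1 ≤ m := by
    rw [← hcard]; exact Finset.card_pos.mpr hne
  have hQ : (a, b) ∉ F → F.card ≤ b - a - 2 := by
    intro hab
    obtain ⟨cd, hcd, hmax⟩ := F.exists_max_image (fun p => p.2 - p.1) hne
    obtain ⟨c, d⟩ := cd
    set Fin' := (F.erase (c, d)).filter (fun p => c ≤ p.1 ∧ p.2 ≤ d) with hFin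
    set Fl := F.filter (fun p => p.2 ≤ c) with hFl
    set Fr := F.filter (fun p => d ≤ p.1) with hFr
    have hsub := split_lemma F a b c d hcd
      (fun p hp => ⟨(hb p hp).1, (hb p hp).2.1, (hb p hp).2.2.1⟩) hnc hmax
    have hcards : F.card ≤ 1 + (Fin'.card + (Fl.card + Fr.card)) := by
      calc F.card ≤ (insert (c, d) (Fin' ∪ (Fl ∪ Fr))).card := Finset.card_le_card hsub
        _ ≤ (Fin' ∪ (Fl ∪ Fr)).card + 1 := Finset.card_insert_le _ _
        _ ≤ (Fin'.card + (Fl ∪ Fr).card) + 1 := by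
            exact Nat.add_le_add_right (Finset.card_union_le _ _) 1
        _ ≤ (Fin'.card + (Fl.card + Fr.card)) + 1 := by
            exact Nat.add_le_add_right (Nat.add_le_add_left (Finset.card_union_le _ _) _) 1
        _ = 1 + (Fin'.card + (Fl.card + Fr.card)) := by omega
    -- cardinalities strictly smaller
    have hFinlt : Fin'.card < m := by
      have : Fin' ⊆ F.erase (c, d) := Finset.filter_subset _ _
      have h2 := Finset.card_le_card this
      have h3 := Finset.card_erase_of_mem hcd
      omega
    have hFllt : Fl.card < m := by
      have h1 : Fl ⊆ F.erase (c, d) := by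
        intro p hp
        simp only [hFl, Finset.mem_filter] at hp
        refine Finset.mem_erase.mpr ⟨?_, hp.1⟩
        intro h; rw [h] at hp
        have := (hb (c, d) hcd).2.1
        simp at hp
        omega
      have h2 := Finset.card_le_card h1
      have h3 := Finset.card_erase_of_mem hcd
      omega
    have hFrlt : Fr.card < m := by
      have h1 : Fr ⊆ F.erase (c, d) := by
        intro p hp
        simp only [hFr, Finset.mem_filter] at hp
        refine Finset.mem_erase.mpr ⟨?_, hp.1⟩
        intro h; rw [h] at hp
        have := (hb (c, d) hcd).2.1
        simp at hp
        omega
      have h2 := Finset.card_le_card h1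
      have h3 := Finset.card_erase_of_mem hcd
      omega
    -- recursive bounds
    have hin : Fin'.card ≤ d - c - 2 := by
      refine ((IH Fin'.card (by omega) Fin' c d rfl ?_ ?_).1 ?_)
      · intro p hp
        simp only [hFin, Finset.mem_filter, Finset.mem_erase] at hp
        have := hb p hp.1.2
        exact ⟨hp.2.1, this.2.1, hp.2.2, this.2.2.2⟩
      · intro p hp q hq
        simp only [hFin, Finset.mem_filter, Finset.mem_erase] at hp hq
        exact hnc p hp.1.2 q hq.1.2
      · simp [hFin]
    have hl : Fl.card ≤ c - a - 1 := by
      refine (IH Fl.card (by omega) Fl a c rfl ?_ ?_).2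
      · intro p hp
        simp only [hFl, Finset.mem_filter] at hp
        have := hb p hp.1
        exact ⟨this.1, this.2.1, hp.2, this.2.2.2⟩
      · intro p hp q hq
        simp only [hFl, Finset.mem_filter] at hp hq
        exact hnc p hp.1 q hq.1
    have hr : Fr.card ≤ b - d - 1 := by
      refine (IH Fr.card (by omega) Fr d b rfl ?_ ?_).2
      · intro p hp
        simp only [hFr, Finset.mem_filter] at hp
        have := hb p hp.1
        exact ⟨hp.2, this.2.1, this.2.2.1, this.2.2.2⟩
      · intro p hp q hq
        simp only [hFr, Finset.mem_filter] at hp hq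
        exact hnc p hp.1 q hq.1
    have hbcd := hb (c, d) hcd
    have hne2 : c ≠ a ∨ d ≠ b := by
      by_contra h
      push_neg at h
      exact hab (h.1 ▸ h.2 ▸ hcd)
    simp only at hbcd
    omega
  refine ⟨hQ, ?_⟩
  by_cases hab : (a, b) ∈ F
  · have h3 : (F.erase (a, b)).card = F.card - 1 := Finset.card_erase_of_mem hab
    have hlt : (F.erase (a, b)).card < m := by omega
    have herase : (F.erase (a, b)).card ≤ b - a - 2 :=
      (IH (F.erase (a, b)).card hlt (F.erase (a, b)) a b rfl
        (fun p hp => hb p (Finset.mem_of_mem_erase hp))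
        (fun p hp q hq => hnc p (Finset.mem_of_mem_erase hp) q (Finset.mem_of_mem_erase hq))).1
        (Finset.notMem_erase _ _)
    have h4 : 2 ≤ b - a := by
      have := (hb (a, b) hab).2.2.2
      simpa using this
    omega
  · have := hQ hab
    omega

/-- Mod-4 bound: noncrossing diagonals of length ≡ 1 mod 4 (and ≥ 2) within [a,b]. -/
private lemma lemA : ∀ (m : ℕ) (F : Finset (ℕ × ℕ)) (a b : ℕ), F.card = m →
    (∀ p ∈ F, a ≤ p.1 ∧ p.1 < p.2 ∧ p.2 ≤ b ∧ (2 ≤ p.2 - p.1 ∧ (p.2 - p.1) % 4 = 1)) →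
    (∀ p ∈ F, ∀ q ∈ F, ¬ Crosses p q) →
    ((a, b) ∉ F → 4 * F.card ≤ b - a - 2) ∧ 4 * F.card ≤ b - a - 1 := by
  intro m
  induction m using Nat.strong_induction_on with
  | _ m IH =>
  intro F a b hcard hb hnc
  rcases F.eq_empty_or_nonempty with rfl | hne
  · simp
  have hm1 : 1 ≤ m := by
    rw [← hcard]; exact Finset.card_pos.mpr hne
  have hQ : (a, b) ∉ F → 4 * F.card ≤ b - a - 2 := by
    intro hab
    obtain ⟨cd, hcd, hmax⟩ := F.exists_max_image (fun p => p.2 - p.1) hne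
    obtain ⟨c, d⟩ := cd
    set Fin' := (F.erase (c, d)).filter (fun p => c ≤ p.1 ∧ p.2 ≤ d) with hFin
    set Fl := F.filter (fun p => p.2 ≤ c) with hFl
    set Fr := F.filter (fun p => d ≤ p.1) with hFr
    have hsub := split_lemma F a b c d hcd
      (fun p hp => ⟨(hb p hp).1, (hb p hp).2.1, (hb p hp).2.2.1⟩) hnc hmax
    have hcards : F.card ≤ 1 + (Fin'.card + (Fl.card + Fr.card)) := by
      calc F.card ≤ (insert (c, d) (Fin' ∪ (Fl ∪ Fr))).card := Finset.card_le_card hsub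
        _ ≤ (Fin' ∪ (Fl ∪ Fr)).card + 1 := Finset.card_insert_le _ _
        _ ≤ (Fin'.card + (Fl ∪ Fr).card) + 1 := by
            exact Nat.add_le_add_right (Finset.card_union_le _ _) 1
        _ ≤ (Fin'.card + (Fl.card + Fr.card)) + 1 := by
            exact Nat.add_le_add_right (Nat.add_le_add_left (Finset.card_union_le _ _) _) 1
        _ = 1 + (Fin'.card + (Fl.card + Fr.card)) := by omega
    have hFinlt : Fin'.card < m := by
      have : Fin' ⊆ F.erase (c, d) := Finset.filter_subset _ _
      have h2 := Finset.card_le_card this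
      have h3 := Finset.card_erase_of_mem hcd
      omega
    have hcd2 : c < d := (hb (c, d) hcd).2.1
    have hFllt : Fl.card < m := by
      have h1 : Fl ⊆ F.erase (c, d) := by
        intro p hp
        simp only [hFl, Finset.mem_filter] at hp
        refine Finset.mem_erase.mpr ⟨?_, hp.1⟩
        intro h; rw [h] at hp
        simp at hp
        omega
      have h2 := Finset.card_le_card h1
      have h3 := Finset.card_erase_of_mem hcd
      omega
    have hFrlt : Fr.card < m := by
      have h1 : Fr ⊆ F.erase (c, d) := by
        intro p hp
        simp only [hFr, Finset.mem_filter] at hp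
        refine Finset.mem_erase.mpr ⟨?_, hp.1⟩
        intro h; rw [h] at hp
        simp at hp
        omega
      have h2 := Finset.card_le_card h1
      have h3 := Finset.card_erase_of_mem hcd
      omega
    have hin : 4 * Fin'.card ≤ d - c - 2 := by
      refine ((IH Fin'.card (by omega) Fin' c d rfl ?_ ?_).1 ?_)
      · intro p hp
        simp only [hFin, Finset.mem_filter, Finset.mem_erase] at hp
        have := hb p hp.1.2
        exact ⟨hp.2.1, this.2.1, hp.2.2, this.2.2.2⟩
      · intro p hp q hq
        simp only [hFin, Finset.mem_filter, Finset.mem_erase] at hp hq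
        exact hnc p hp.1.2 q hq.1.2
      · simp [hFin]
    have hl : 4 * Fl.card ≤ c - a - 1 := by
      refine (IH Fl.card (by omega) Fl a c rfl ?_ ?_).2
      · intro p hp
        simp only [hFl, Finset.mem_filter] at hp
        have := hb p hp.1
        exact ⟨this.1, this.2.1, hp.2, this.2.2.2⟩
      · intro p hp q hq
        simp only [hFl, Finset.mem_filter] at hp hq
        exact hnc p hp.1 q hq.1
    have hr : 4 * Fr.card ≤ b - d - 1 := by
      refine (IH Fr.card (by omega) Fr d b rfl ?_ ?_).2
      · intro p hp
        simp only [hFr, Finset.mem_filter] at hp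
        have := hb p hp.1
        exact ⟨hp.2, this.2.1, this.2.2.1, this.2.2.2⟩
      · intro p hp q hq
        simp only [hFr, Finset.mem_filter] at hp hq
        exact hnc p hp.1 q hq.1
    have hac : a ≤ c := (hb (c, d) hcd).1
    have hdb : d ≤ b := (hb (c, d) hcd).2.2.1
    have hlen : 2 ≤ d - c := (hb (c, d) hcd).2.2.2.1
    have hmod : (d - c) % 4 = 1 := (hb (c, d) hcd).2.2.2.2
    have hne2 : c ≠ a ∨ d ≠ b := by
      by_contra h
      push_neg at h
      exact hab (h.1 ▸ h.2 ▸ hcd)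
    omega
  refine ⟨hQ, ?_⟩
  by_cases hab : (a, b) ∈ F
  · have h3 : (F.erase (a, b)).card = F.card - 1 := Finset.card_erase_of_mem hab
    have hlt : (F.erase (a, b)).card < m := by omega
    have herase : 4 * (F.erase (a, b)).card ≤ b - a - 2 :=
      (IH (F.erase (a, b)).card hlt (F.erase (a, b)) a b rfl
        (fun p hp => hb p (Finset.mem_of_mem_erase hp))
        (fun p hp q hq => hnc p (Finset.mem_of_mem_erase hp) q (Finset.mem_of_mem_erase hq))).1
        (Finset.notMem_erase _ _)
    have h4 : 2 ≤ b - a := (hb (a, b) hab).2.2.2.1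
    have h5 : (b - a) % 4 = 1 := (hb (a, b) hab).2.2.2.2
    omega
  · have := hQ hab
    omega

private lemma apex {n : ℕ} (T : PolyTriangulation n) (hn : 6 ≤ n) {p : ℕ × ℕ}
    (hp : p ∈ T.diags) :
    ∃ x, p.1 < x ∧ x < p.2 ∧ (x = p.1 + 1 ∨ (p.1, x) ∈ T.diags) ∧
      (p.2 = x + 1 ∨ (x, p.2) ∈ T.diags) := by
  obtain ⟨hlt, h2n, hlen2, hlenn⟩ := T.isDiag p hp
  obtain ⟨a, b⟩ := p
  simp only at hlt h2n hlen2 hlenn ⊢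
  set W := (Finset.range b).filter (fun x => a < x ∧ (x = a + 1 ∨ (a, x) ∈ T.diags)) with hW
  have hW1 : a + 1 ∈ W := by
    refine Finset.mem_filter.mpr ⟨Finset.mem_range.mpr (by omega), by omega, Or.inl rfl⟩
  have hWne : W.Nonempty := ⟨a + 1, hW1⟩
  set x := W.max' hWne with hx
  have hxW : x ∈ W := W.max'_mem hWne
  have hxprop : x < b ∧ a < x ∧ (x = a + 1 ∨ (a, x) ∈ T.diags) := by
    simpa [hW] using hxW
  refine ⟨x, hxprop.2.1, hxprop.1, hxprop.2.2, ?_⟩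
  by_contra hcon
  push_neg at hcon
  obtain ⟨hbx, hxb⟩ := hcon
  have hxb2 : x + 1 < b := by omega
  have hkey : ∀ q ∈ T.diags,
      ¬((x < q.1 ∧ q.1 < b ∧ b < q.2) ∨ (q.1 < x ∧ x < q.2 ∧ q.2 < b)) := by
    intro q hq
    obtain ⟨hq1, hq2, hq3, hq4⟩ := T.isDiag q hq
    rintro (⟨ha1, ha2, ha3⟩ | ⟨ha1, ha2, ha3⟩)
    · exact T.noncross (a, b) hp q hq (Or.inl ⟨by omega, ha2, ha3⟩)
    · rcases lt_trichotomy q.1 a with hh | hh | hh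
      · exact T.noncross (a, b) hp q hq (Or.inr ⟨hh, by omega, by omega⟩)
      · have hqW : q.2 ∈ W := by
          simp only [hW, Finset.mem_filter, Finset.mem_range]
          refine ⟨by omega, by omega, Or.inr ?_⟩
          rw [← hh]
          exact hq
        have := W.le_max' q.2 hqW
        omega
      · rcases hxprop.2.2 with hxa | hxa
        · omega
        · exact T.noncross (a, x) hxa q hq (Or.inl ⟨hh, by omega, by omega⟩)
  have hnotin : (x, b) ∉ T.diags := hxb
  have hins : (insert (x, b) T.diags).card = n - 3 + 1 := by
    rw [Finset.card_insert_of_notMem hnotin, T.card_eq]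
  have hbound : (insert (x, b) T.diags).card ≤ (n - 1) - 0 - 2 := by
    refine (lemU (insert (x, b) T.diags).card (insert (x, b) T.diags) 0 (n - 1) rfl ?_ ?_).1 ?_
    · intro q hq
      rcases Finset.mem_insert.mp hq with rfl | hq
      · exact ⟨Nat.zero_le _, by omega, by omega, by omega⟩
      · obtain ⟨g1, g2, g3, g4⟩ := T.isDiag q hq
        exact ⟨Nat.zero_le _, g1, by omega, g3⟩
    · intro q hq r hr
      rcases Finset.mem_insert.mp hq with rfl | hq <;>
        rcases Finset.mem_insert.mp hr with rfl | hr
      · simp only [Crosses]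
        omega
      · have := hkey r hr
        simp only [Crosses]
        omega
      · have := hkey q hq
        simp only [Crosses]
        omega
      · exact T.noncross q hq r hr
    · intro hmem
      rcases Finset.mem_insert.mp hmem with heq | hmem2
      · have h1 : (0 : ℕ) = x := congrArg Prod.fst heq
        omega
      · obtain ⟨g1, g2, g3, g4⟩ := T.isDiag _ hmem2
        simp only at g1 g2 g3 g4
        omega
  omega

private lemma no_double {n : ℕ} (T : PolyTriangulation n) (hn : 6 ≤ n) (hn4 : n % 4 = 2)
    {p : ℕ × ℕ} (hp : p ∈ T.diags) {u v : Fin n} (hu : IsCentral T u) (hv : IsCentral T v)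
    (hu1 : u.val = p.1) (hv2 : v.val = p.2) : False := by
  obtain ⟨hlt, h2n, hlen2, hlenn⟩ := T.isDiag p hp
  obtain ⟨x, hx1, hx2, hxa, hxb⟩ := apex T hn hp
  have hn0 : 0 < n := by omega
  have hxlt : x < n := by omega
  set x' : Fin n := ⟨x, hxlt⟩ with hx'
  have hadju : T.graph.Adj u x' := by
    rw [adj_iff]
    refine ⟨Fin.ne_of_val_ne (by show u.val ≠ x; omega), ?_⟩
    rcases hxa with h | h
    · left
      show (u.val + 1) % n = x
      rw [hu1, ← h]
      exact Nat.mod_eq_of_lt (by omega)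
    · right; right
      have hmin : min u.val x'.val = p.1 := by show min u.val x = p.1; omega
      have hmax : max u.val x'.val = x := by show max u.val x = x; omega
      rw [hmin, hmax]
      exact h
  have hadjv : T.graph.Adj v x' := by
    rw [adj_iff]
    refine ⟨Fin.ne_of_val_ne (by show v.val ≠ x; omega), ?_⟩
    rcases hxb with h | h
    · right; left
      show (x + 1) % n = v.val
      rw [hv2, ← h]
      exact Nat.mod_eq_of_lt (by omega)
    · right; right
      have hmin : min v.val x'.val = x := by show min v.val x = x; omega
      have hmax : max v.val x'.val = p.2 := by show max v.val x = p.2; omega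
      rw [hmin, hmax]
      exact h
  have hiu := central_idx T hn hu hadju
  have hiv := central_idx T hn hv hadjv
  rw [show x'.val = x from rfl, hu1] at hiu
  rw [mod_small (x + n - p.1) n hn0 (by omega), if_neg (by omega)] at hiu
  rw [show x'.val = x from rfl, hv2] at hiv
  rw [mod_small (x + n - p.2) n hn0 (by omega), if_pos (by omega)] at hiv
  have hm := chord_mod4 T hn hn4 hu hp (Or.inl hu1.symm)
  omega


/-- in every generalized sun graph, the number of degree-2 vertices
strictly exceeds the number of central vertices. -/
theorem stmt14 (n : ℕ) (T : PolyTriangulation n) (hs : IsGenSun T) :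
    {v : Fin n | IsCentral T v}.ncard < {v : Fin n | pdeg T v = 2}.ncard := by
  classical
  obtain ⟨hn4, hsum⟩ := hs
  by_cases hn6 : 6 ≤ n
  case neg =>
    -- n = 2 : derive a contradiction from hsum
    have hn2 : n = 2 := by omega
    subst hn2
    exfalso
    have hple : ∀ v : Fin 2, pdeg T v ≤ 1 := by
      intro v
      have hsub : T.graph.neighborSet v ⊆ {⟨1 - v.val, by omega⟩} := by
        intro u hu
        have hne : u ≠ v := (SimpleGraph.mem_neighborSet _ _ _ |>.mp hu).ne'
        have hne' : u.val ≠ v.val := fun h => hne (Fin.ext h)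
        have h1 := u.isLt
        have h2 := v.isLt
        simp only [Set.mem_singleton_iff]
        apply Fin.ext
        show u.val = 1 - v.val
        omega
      calc pdeg T v ≤ ({⟨1 - v.val, by omega⟩} : Set (Fin 2)).ncard :=
            Set.ncard_le_ncard hsub (Set.finite_singleton _)
        _ = 1 := Set.ncard_singleton _
    have hD : {v : Fin 2 | pdeg T v = 2} = ∅ := by
      ext v
      simp only [Set.mem_setOf_eq, Set.mem_empty_iff_false, iff_false]
      have := hple v
      omega
    have hCu : {v : Fin 2 | IsCentral T v} = Set.univ := by
      ext v
      simp only [Set.mem_setOf_eq, Set.mem_univ, iff_true]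
      constructor
      · intro u _
        have := hple u
        omega
      · intro u w hu hw
        have h1 : u = w := by
          apply Fin.ext
          have g1 : u.val ≠ v.val := fun h => hu.ne' (Fin.ext h)
          have g2 : w.val ≠ v.val := fun h => hw.ne' (Fin.ext h)
          have := u.isLt; have := w.isLt; have := v.isLt
          omega
        rw [h1]
    rw [hD, hCu] at hsum
    rw [Set.ncard_empty, Set.ncard_univ] at hsum
    simp [Nat.card_eq_fintype_card] at hsum
  case pos =>
    set Cs := Finset.univ.filter (fun v : Fin n => IsCentral T v) with hCs
    set Ds := Finset.univ.filter (fun v : Fin n => pdeg T v = 2) with hDs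
    have hCcard : {v : Fin n | IsCentral T v}.ncard = Cs.card := by
      rw [show {v : Fin n | IsCentral T v} = ↑Cs by ext v; simp [hCs]]
      exact Set.ncard_coe_finset _
    have hDcard : {v : Fin n | pdeg T v = 2}.ncard = Ds.card := by
      rw [show {v : Fin n | pdeg T v = 2} = ↑Ds by ext v; simp [hDs]]
      exact Set.ncard_coe_finset _
    set Fcen := T.diags.filter (fun p => (p.2 - p.1) % 4 = 1) with hFcen
    have hF4 : 4 * Fcen.card ≤ (n - 1) - 0 - 1 := by
      refine (lemA Fcen.card Fcen 0 (n - 1) rfl ?_ ?_).2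
      · intro q hq
        rw [hFcen, Finset.mem_filter] at hq
        obtain ⟨g1, g2, g3, g4⟩ := T.isDiag q hq.1
        exact ⟨Nat.zero_le _, g1, by omega, g3, hq.2⟩
      · intro q hq r hr
        rw [hFcen, Finset.mem_filter] at hq hr
        exact T.noncross q hq.1 r hr.1
    have hinj : Cs.card ≤ Fcen.card := by
      apply Finset.card_le_card_of_injOn
        (fun v => if h : ∃ p ∈ T.diags, p.1 = v.val ∨ p.2 = v.val then h.choose else (0, 0))
      · intro v hv
        have hcent : IsCentral T v := by
          rw [hCs] at hv
          exact (Finset.mem_filter.mp hv).2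
        have hex := central_chord T hn6 hcent
        beta_reduce
        rw [dif_pos hex]
        have hspec := hex.choose_spec
        rw [Finset.mem_coe, hFcen, Finset.mem_filter]
        exact ⟨hspec.1, chord_mod4 T hn6 hn4 hcent hspec.1 hspec.2⟩
      · intro u hu v hv heq
        have hcu : IsCentral T u := by
          have := Finset.mem_coe.mp hu
          rw [hCs] at this
          exact (Finset.mem_filter.mp this).2
        have hcv : IsCentral T v := by
          have := Finset.mem_coe.mp hv
          rw [hCs] at this
          exact (Finset.mem_filter.mp this).2
        by_contra hne
        have hvals : u.val ≠ v.val := fun h => hne (Fin.ext h)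
        have hexu := central_chord T hn6 hcu
        have hexv := central_chord T hn6 hcv
        simp only at heq
        rw [dif_pos hexu, dif_pos hexv] at heq
        have hsu := hexu.choose_spec
        have hsv := hexv.choose_spec
        rw [← heq] at hsv
        have hd := T.isDiag _ hsu.1
        rcases hsu.2 with h1 | h1 <;> rcases hsv.2 with h2 | h2
        · exact hvals (by omega)
        · exact no_double T hn6 hn4 hsu.1 hcu hcv h1.symm h2.symm
        · exact no_double T hn6 hn4 hsu.1 hcv hcu h2.symm h1.symm
        · exact hvals (by omega)
    rw [hCcard, hDcard] at hsum ⊢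
    omega
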